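/- For r > 0, the equation arcsin(x)/x = (1 + 8r²x²)·√(1-x²) has a solution x ∈ (0,1) if and only if r > 1/(2√3). -/

import Mathlib

open Real Set

private lemma gderiv' (t : ℝ) :
    HasDerivAt (fun t : ℝ => t - Real.sin t * Real.cos t - 2/3 * (Real.sin t ^ 3 * Real.cos t))
      (8/3 * Real.sin t ^ 4) t := by
  have h1 := (Real.hasDerivAt_sin t).mul (Real.hasDerivAt_cos t)
  have h2 := (((Real.hasDerivAt_sin t).pow 3).mul (Real.hasDerivAt_cos t)).const_mul (2/3 : ℝ)
  have h := ((hasDerivAt_id t).sub h1).sub h2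
  refine h.congr_deriv ?_
  have hs := Real.sin_sq_add_cos_sq t
  push_cast
  norm_num [Pi.pow_apply]
  have hs2 : (sin t ^ 2 + cos t ^ 2) * sin t ^ 2 = 1 * sin t ^ 2 := by rw [hs]
  nlinarith [hs, hs2]

private lemma key_lower' {θ : ℝ} (h0 : 0 < θ) (h1 : θ ≤ π / 2) :
    Real.sin θ * Real.cos θ + 2/3 * (Real.sin θ ^ 3 * Real.cos θ) < θ := by
  set g : ℝ → ℝ := fun t => t - Real.sin t * Real.cos t - 2/3 * (Real.sin t ^ 3 * Real.cos t)
    with hg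
  have hmono : StrictMonoOn g (Icc 0 (π/2)) := by
    apply strictMonoOn_of_deriv_pos (convex_Icc _ _)
    · exact fun t _ => ((gderiv' t).continuousAt).continuousWithinAt
    · intro t ht
      rw [interior_Icc] at ht
      rw [(gderiv' t).deriv]
      have : 0 < Real.sin t :=
        Real.sin_pos_of_pos_of_lt_pi ht.1 (lt_of_lt_of_le ht.2 (by linarith [Real.pi_pos]))
      positivity
  have := hmono (left_mem_Icc.2 (by linarith [Real.pi_pos])) ⟨h0.le, h1⟩ h0
  simp [hg] at this
  linarith

private lemma key_upper' {θ : ℝ} (h0 : 0 ≤ θ) :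
    θ - Real.sin θ * Real.cos θ - 2/3 * (Real.sin θ ^ 3 * Real.cos θ) ≤ 8/15 * θ ^ 5 := by
  set h : ℝ → ℝ :=
    fun t => 8/15 * t ^ 5 - (t - Real.sin t * Real.cos t - 2/3 * (Real.sin t ^ 3 * Real.cos t))
    with hh
  have hd : ∀ t, HasDerivAt h (8/3 * t ^ 4 - 8/3 * Real.sin t ^ 4) t := by
    intro t
    exact ((hasDerivAt_pow 5 t).const_mul (8/15 : ℝ)).sub (gderiv' t) |>.congr_deriv
      (by push_cast; ring)
  have hmono : MonotoneOn h (Ici 0) := by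
    apply monotoneOn_of_deriv_nonneg (convex_Ici _)
    · exact fun t _ => ((hd t).continuousAt).continuousWithinAt
    · exact fun t _ => (hd t).differentiableAt.differentiableWithinAt
    · intro t ht
      rw [interior_Ici] at ht
      rw [(hd t).deriv]
      have h1 : Real.sin t ^ 2 ≤ t ^ 2 := Real.sin_sq_le_sq
      nlinarith [sq_nonneg (Real.sin t), sq_nonneg t]
  have := hmono self_mem_Ici (mem_Ici.2 h0) h0
  simp [hh] at this
  linarith

private lemma cos_one_gt_half : (1:ℝ)/2 < Real.cos 1 := by
  have hs : Real.sin (1/2) < 1/2 := Real.sin_lt (by norm_num)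
  have hs0 : 0 < Real.sin (1/2) :=
    Real.sin_pos_of_pos_of_lt_pi (by norm_num) (by linarith [Real.pi_gt_three])
  have hc : Real.cos 1 = 1 - 2 * Real.sin (1/2) ^ 2 := by
    have h1 := Real.cos_two_mul (1/2)
    have h2 := Real.sin_sq_add_cos_sq (1/2)
    norm_num at h1
    nlinarith
  nlinarith

set_option maxHeartbeats 1000000 in
theorem critical_radius (r : ℝ) (hr : 0 < r) :
    (∃ x ∈ Set.Ioo (0:ℝ) 1,
        Real.arcsin x / x = (1 + 8 * r^2 * x^2) * Real.sqrt (1 - x^2)) ↔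
      r > 1 / (2 * Real.sqrt 3) := by
  have hsqrt3 : (0:ℝ) < Real.sqrt 3 := Real.sqrt_pos.2 (by norm_num)
  have hcrit : (1 / (2 * Real.sqrt 3))^2 = 1/12 := by
    rw [div_pow, mul_pow, Real.sq_sqrt (by norm_num : (3:ℝ) ≥ 0)]
    norm_num
  have hcritpos : (0:ℝ) < 1 / (2 * Real.sqrt 3) := by positivity
  constructor
  · rintro ⟨x, ⟨hx0, hx1⟩, heq⟩
    set θ := Real.arcsin x with hθ
    have hθ0 : 0 < θ := Real.arcsin_pos.2 hx0
    have hθ2 : θ < π / 2 := Real.arcsin_lt_pi_div_two.2 hx1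
    have hsin : Real.sin θ = x := Real.sin_arcsin (by linarith) hx1.le
    have hcos : Real.cos θ = Real.sqrt (1 - x^2) := by
      rw [Real.cos_eq_sqrt_one_sub_sin_sq (by linarith [Real.pi_pos]) hθ2.le, hsin]
    have hcp : 0 < Real.cos θ := Real.cos_pos_of_mem_Ioo ⟨by linarith [Real.pi_pos], hθ2⟩
    have heq' : θ = Real.sin θ * Real.cos θ + 8 * r^2 * (Real.sin θ ^ 3 * Real.cos θ) := by
      have : θ / x = (1 + 8 * r^2 * x^2) * Real.sqrt (1 - x^2) := heq
      rw [← hcos, ← hsin] at this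
      field_simp [hsin, hx0.ne'] at this
      linear_combination this
    have hkey := key_lower' hθ0 hθ2.le
    have hsp : 0 < Real.sin θ := by rw [hsin]; exact hx0
    have h83 : 8 * r^2 > 2/3 := by
      by_contra hcon
      push_neg at hcon
      have : 8 * r^2 * (Real.sin θ ^ 3 * Real.cos θ) ≤ 2/3 * (Real.sin θ ^ 3 * Real.cos θ) := by
        apply mul_le_mul_of_nonneg_right hcon (by positivity)
      linarith
    have hr12 : (1 / (2 * Real.sqrt 3))^2 < r^2 := by rw [hcrit]; linarith
    exact lt_of_pow_lt_pow_left₀ 2 hr.le hr12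
  · intro hrc
    have h83 : 2/3 < 8 * r^2 := by
      have : (1 / (2 * Real.sqrt 3))^2 < r^2 := by
        apply pow_lt_pow_left₀ hrc hcritpos.le
        norm_num
      rw [hcrit] at this
      linarith
    set ε : ℝ := 8 * r^2 - 2/3 with hε
    have hεpos : 0 < ε := by rw [hε]; linarith
    set F : ℝ → ℝ := fun t => t - Real.sin t * Real.cos t - 8 * r^2 * (Real.sin t ^ 3 * Real.cos t)
      with hF
    -- small point θ₁
    set θ₁ : ℝ := min 1 (Real.sqrt ε / 2) with hθ₁
    have hθ₁pos : 0 < θ₁ := lt_min one_pos (by positivity)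
    have hθ₁le1 : θ₁ ≤ 1 := min_le_left _ _
    have hθ₁sq : θ₁^2 < 3/8 * ε := by
      have h1 : θ₁ ≤ Real.sqrt ε / 2 := min_le_right _ _
      have h2 : θ₁^2 ≤ (Real.sqrt ε / 2)^2 := pow_le_pow_left₀ hθ₁pos.le h1 2
      rw [div_pow, Real.sq_sqrt hεpos.le] at h2
      linarith
    have hsin₁ : 3/4 * θ₁ < Real.sin θ₁ := by
      have := Real.sin_gt_sub_cube hθ₁pos
      nlinarith [pow_le_pow_left₀ hθ₁pos.le hθ₁le1 3]
    have hcos₁ : 1/2 < Real.cos θ₁ := by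
      rcases eq_or_lt_of_le hθ₁le1 with h | h
      · rw [h]; exact cos_one_gt_half
      · calc (1:ℝ)/2 < Real.cos 1 := cos_one_gt_half
          _ ≤ Real.cos θ₁ := by
            apply Real.cos_le_cos_of_nonneg_of_le_pi hθ₁pos.le (by linarith [Real.pi_gt_three]) h.le
    have hFθ₁ : F θ₁ < 0 := by
      have hup := key_upper' hθ₁pos.le
      have hsc : θ₁^3 / 5 < Real.sin θ₁ ^ 3 * Real.cos θ₁ := by
        have h3 : (3/4 * θ₁)^3 ≤ Real.sin θ₁ ^ 3 := by
          apply pow_le_pow_left₀ (by positivity) hsin₁.le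
        nlinarith [pow_pos hθ₁pos 3, Real.sin_pos_of_pos_of_lt_pi hθ₁pos
          (by linarith [Real.pi_gt_three] : θ₁ < π)]
      have hgoal : 8/15 * θ₁^5 < ε * (θ₁^3 / 5) := by
        have : θ₁^5 = θ₁^2 * θ₁^3 := by ring
        rw [this]
        have h3 : 0 < θ₁^3 := pow_pos hθ₁pos 3
        nlinarith
      have : F θ₁ = (θ₁ - Real.sin θ₁ * Real.cos θ₁ - 2/3 * (Real.sin θ₁ ^ 3 * Real.cos θ₁))
          - ε * (Real.sin θ₁ ^ 3 * Real.cos θ₁) := by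
        simp only [hF, hε]; ring
      rw [this]
      have : ε * (θ₁^3/5) < ε * (Real.sin θ₁ ^ 3 * Real.cos θ₁) :=
        mul_lt_mul_of_pos_left hsc hεpos
      linarith
    -- large point θ₂
    set c : ℝ := min (1/2) (1/(2*(1 + 8 * r^2))) with hc
    have hcpos : 0 < c := lt_min (by norm_num) (by positivity)
    have hchalf : c ≤ 1/2 := min_le_left _ _
    have hcbound : c * (1 + 8 * r^2) ≤ 1/2 := by
      have h1 : c ≤ 1/(2*(1 + 8 * r^2)) := min_le_right _ _
      have h2 : 0 < 1 + 8 * r^2 := by positivity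
      calc c * (1 + 8 * r^2) ≤ 1/(2*(1 + 8 * r^2)) * (1 + 8 * r^2) :=
            mul_le_mul_of_nonneg_right h1 h2.le
        _ = 1/2 := by field_simp
    set θ₂ : ℝ := Real.arccos c with hθ₂
    have hcosθ₂ : Real.cos θ₂ = c := Real.cos_arccos (by linarith) (by linarith)
    have hθ₂lt : θ₂ < π / 2 := Real.arccos_lt_pi_div_two.2 hcpos
    have hθ₂gt1 : 1 < θ₂ := by
      by_contra hcon
      push_neg at hcon
      have : Real.cos 1 ≤ Real.cos θ₂ :=
        Real.cos_le_cos_of_nonneg_of_le_pi (Real.arccos_nonneg c)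
          (by linarith [Real.pi_gt_three]) hcon
      rw [hcosθ₂] at this
      linarith [cos_one_gt_half]
    have hsinθ₂ : Real.sin θ₂ ≤ 1 := Real.sin_le_one _
    have hsinθ₂pos : 0 < Real.sin θ₂ := Real.sin_pos_of_pos_of_lt_pi (by linarith)
      (by linarith [Real.pi_pos])
    have hFθ₂ : 0 < F θ₂ := by
      have h1 : Real.sin θ₂ * Real.cos θ₂ ≤ c := by
        rw [hcosθ₂]
        nlinarith
      have h2 : 8 * r^2 * (Real.sin θ₂ ^ 3 * Real.cos θ₂) ≤ 8 * r^2 * c := by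
        rw [hcosθ₂]
        have h3 : Real.sin θ₂ ^ 3 ≤ 1 := pow_le_one₀ hsinθ₂pos.le hsinθ₂
        have h4 : (0:ℝ) ≤ 8 * r^2 * c * (1 - Real.sin θ₂ ^ 3) :=
          mul_nonneg (mul_nonneg (by positivity) hcpos.le) (by linarith)
        nlinarith [h4]
      have : F θ₂ ≥ θ₂ - c - 8 * r^2 * c := by simp only [hF]; linarith
      nlinarith
    -- IVT
    have hθle : θ₁ ≤ θ₂ := by linarith
    have hcont : ContinuousOn F (Icc θ₁ θ₂) := by
      apply Continuous.continuousOn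
      simp only [hF]
      fun_prop
    have h0mem : (0:ℝ) ∈ Ioo (F θ₁) (F θ₂) := ⟨hFθ₁, hFθ₂⟩
    obtain ⟨θ₀, hθ₀mem, hθ₀⟩ := intermediate_value_Ioo hθle hcont h0mem
    have hθ₀pos : 0 < θ₀ := lt_trans hθ₁pos hθ₀mem.1
    have hθ₀lt : θ₀ < π / 2 := lt_trans hθ₀mem.2 hθ₂lt
    have hsp : 0 < Real.sin θ₀ := Real.sin_pos_of_pos_of_lt_pi hθ₀pos
      (by linarith [Real.pi_pos])
    have hslt : Real.sin θ₀ < 1 := by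
      have := Real.strictMonoOn_sin (a := θ₀) (b := π/2)
        ⟨by linarith [Real.pi_pos], hθ₀lt.le⟩
        ⟨by linarith [Real.pi_pos], le_refl _⟩ hθ₀lt
      rwa [Real.sin_pi_div_two] at this
    refine ⟨Real.sin θ₀, ⟨hsp, hslt⟩, ?_⟩
    have harc : Real.arcsin (Real.sin θ₀) = θ₀ :=
      Real.arcsin_sin (by linarith [Real.pi_pos]) hθ₀lt.le
    have hsq : Real.sqrt (1 - Real.sin θ₀ ^ 2) = Real.cos θ₀ :=
      (Real.cos_eq_sqrt_one_sub_sin_sq (by linarith [Real.pi_pos]) hθ₀lt.le).symm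
    rw [harc, hsq]
    have hF0 : θ₀ = Real.sin θ₀ * Real.cos θ₀ + 8 * r^2 * (Real.sin θ₀ ^ 3 * Real.cos θ₀) := by
      have h5 : θ₀ - Real.sin θ₀ * Real.cos θ₀
          - 8 * r^2 * (Real.sin θ₀ ^ 3 * Real.cos θ₀) = 0 := hθ₀
      linarith
    rw [div_eq_iff hsp.ne']
    linear_combination hF0
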